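/- (Gyöngy–Krylov criterion) Let X be a Polish space (separable, completely metrizable, with a fixed compatible metric dist and its Borel σ-algebra), let (Ω, F, P) be a probability space, and let (Y_j)_{j ≥ 0} be a sequence of Borel-measurable maps Y_j : Ω → X. Then the following are equivalent: (i) there exists a Borel-measurable Y : Ω → X such that for every ε > 0, P({ω : dist(Y_j(ω), Y(ω)) > ε}) → 0 as j → ∞ (i.e., (Y_j) converges in probability); (ii) for every pair of strictly increasing sequences (j_k)_{k ≥ 0} and (l_k)_{k ≥ 0} of natural numbers, the sequence of joint laws μ_k = P ∘ (Y_{j_k}, Y_{l_k})^{−1} on X × X has a subsequence that converges weakly to some Borel probability measure μ on X × X satisfying μ({(u, v) ∈ X × X : u = v}) = 1. -/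

import Mathlib

open MeasureTheory Filter

section Aux

variable {X : Type*} [MetricSpace X] [TopologicalSpace.SeparableSpace X]
    [CompleteSpace X] [MeasurableSpace X] [BorelSpace X]
    {Ω : Type*} [MeasurableSpace Ω] (P : Measure Ω) [IsProbabilityMeasure P]
    (Y : ℕ → Ω → X)

/-- Forward direction: convergence in probability implies the joint-law condition. -/
lemma stmt11_forward (hY : ∀ j, Measurable (Y j)) (Ylim : Ω → X) (hmeas : Measurable Ylim)
    (htend : ∀ ε : ℝ, 0 < ε →
      Tendsto (fun j => P {ω | ε < dist (Y j ω) (Ylim ω)}) atTop (nhds 0))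
    (j l : ℕ → ℕ) (hj : StrictMono j) (hl : StrictMono l) :
    ∃ φ : ℕ → ℕ, StrictMono φ ∧
      ∃ μ : Measure (X × X), IsProbabilityMeasure μ ∧
        (∀ f : BoundedContinuousFunction (X × X) ℝ,
          Tendsto
            (fun k => ∫ p, f p ∂(P.map (fun ω => (Y (j (φ k)) ω, Y (l (φ k)) ω))))
            atTop (nhds (∫ p, f p ∂μ))) ∧
        μ {p : X × X | p.1 = p.2} = 1 := by
  haveI : SecondCountableTopology X := UniformSpace.secondCountable_of_separable X
  set Zlim : Ω → X × X := fun ω => (Ylim ω, Ylim ω) with hZlimdef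
  have hZlim : Measurable Zlim := hmeas.prodMk hmeas
  set Z : ℕ → Ω → X × X := fun k ω => (Y (j k) ω, Y (l k) ω) with hZdef
  have hZ : ∀ k, Measurable (Z k) := fun k => (hY (j k)).prodMk (hY (l k))
  -- nonstrict version of convergence in probability
  have htm0 : TendstoInMeasure P Y atTop Ylim := by
    rw [tendstoInMeasure_iff_dist]
    intro ε hε
    refine tendsto_of_tendsto_of_tendsto_of_le_of_le tendsto_const_nhds
      (htend (ε / 2) (by positivity)) (fun n => zero_le) (fun n => measure_mono ?_)
    intro ω hω
    exact lt_of_lt_of_le (half_lt_self hε) hω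
  have htmj : TendstoInMeasure P (fun k => Y (j k)) atTop Ylim :=
    fun ε hε => (htm0 ε hε).comp hj.tendsto_atTop
  have html : TendstoInMeasure P (fun k => Y (l k)) atTop Ylim :=
    fun ε hε => (htm0 ε hε).comp hl.tendsto_atTop
  have htmZ : TendstoInMeasure P Z atTop Zlim := by
    rw [tendstoInMeasure_iff_dist]
    intro ε hε
    have h1 := tendstoInMeasure_iff_dist.mp htmj ε hε
    have h2 := tendstoInMeasure_iff_dist.mp html ε hε
    refine tendsto_of_tendsto_of_tendsto_of_le_of_le tendsto_const_nhds
      (by simpa using h1.add h2) (fun n => zero_le) (fun k => ?_)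
    refine le_trans (measure_mono ?_) (measure_union_le _ _)
    intro ω hω
    have : ε ≤ max (dist (Y (j k) ω) (Ylim ω)) (dist (Y (l k) ω) (Ylim ω)) := by
      simpa [Z, Zlim, Prod.dist_eq] using hω
    rcases le_max_iff.mp this with h | h
    · exact Or.inl h
    · exact Or.inr h
  refine ⟨id, strictMono_id, P.map Zlim, Measure.isProbabilityMeasure_map hZlim.aemeasurable, ?_, ?_⟩
  · intro f
    have hint : ∀ g : Ω → X × X, Measurable g →
        ∫ p, f p ∂(P.map g) = ∫ ω, f (g ω) ∂P := fun g hg =>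
      integral_map hg.aemeasurable f.continuous.aestronglyMeasurable
    simp only [id_eq]
    rw [hint Zlim hZlim]
    have : (fun k => ∫ p, f p ∂(P.map (fun ω => (Y (j k) ω, Y (l k) ω)))) =
        fun k => ∫ ω, f (Z k ω) ∂P := funext fun k => hint (Z k) (hZ k)
    rw [this]
    refine tendsto_of_subseq_tendsto fun ns hns => ?_
    have htmZns : TendstoInMeasure P (fun i => Z (ns i)) atTop Zlim :=
      fun ε hε => (htmZ ε hε).comp hns
    obtain ⟨ms, _hms, hae⟩ := htmZns.exists_seq_tendsto_ae
    refine ⟨ms, ?_⟩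
    refine tendsto_integral_of_dominated_convergence (fun _ => ‖f‖)
      (fun i => (f.continuous.measurable.comp (hZ _)).aestronglyMeasurable)
      (integrable_const _) (fun i => .of_forall fun ω => f.norm_coe_le_norm _) ?_
    filter_upwards [hae] with ω hω
    exact (f.continuous.tendsto _).comp hω
  · have hpre : Zlim ⁻¹' {p : X × X | p.1 = p.2} = Set.univ := by
      ext ω; simp [Zlim]
    rw [Measure.map_apply hZlim
      ((isClosed_eq continuous_fst continuous_snd).measurableSet), hpre, measure_univ]

/-- From the joint-law condition, the sequence is Cauchy in probability. -/
lemma stmt11_cauchy (hY : ∀ j, Measurable (Y j))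
    (h : ∀ j l : ℕ → ℕ, StrictMono j → StrictMono l →
      ∃ φ : ℕ → ℕ, StrictMono φ ∧
        ∃ μ : Measure (X × X), IsProbabilityMeasure μ ∧
          (∀ f : BoundedContinuousFunction (X × X) ℝ,
            Tendsto
              (fun k => ∫ p, f p ∂(P.map (fun ω => (Y (j (φ k)) ω, Y (l (φ k)) ω))))
              atTop (nhds (∫ p, f p ∂μ))) ∧
          μ {p : X × X | p.1 = p.2} = 1) :
    ∀ ε : ℝ, 0 < ε → ∀ δ : ENNReal, 0 < δ → ∃ N : ℕ, ∀ m n : ℕ, N ≤ m → N ≤ n →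
      P {ω | ε < dist (Y m ω) (Y n ω)} < δ := by
  haveI : SecondCountableTopology X := UniformSpace.secondCountable_of_separable X
  intro ε hε δ hδ
  by_contra hcon
  push_neg at hcon
  -- hcon : ∀ N, ∃ m n, N ≤ m ∧ N ≤ n ∧ δ ≤ P {...}
  choose m n hm hn hP using hcon
  set G : ℕ → ℕ := fun k => Nat.rec 0 (fun _ g => max (m g) (n g) + 1) k with hGdef
  have hG : ∀ k, G (k + 1) = max (m (G k)) (n (G k)) + 1 := fun k => rfl
  have hjmono : StrictMono (fun k => m (G k)) := by
    refine strictMono_nat_of_lt_succ fun k => ?_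
    calc m (G k) < max (m (G k)) (n (G k)) + 1 :=
          Nat.lt_succ_of_le (le_max_left _ _)
      _ ≤ m (G (k + 1)) := by rw [hG]; exact hm _
  have hlmono : StrictMono (fun k => n (G k)) := by
    refine strictMono_nat_of_lt_succ fun k => ?_
    calc n (G k) < max (m (G k)) (n (G k)) + 1 :=
          Nat.lt_succ_of_le (le_max_right _ _)
      _ ≤ n (G (k + 1)) := by rw [hG]; exact hn _
  obtain ⟨φ, hφ, μ, hμP, hconv, hdiag⟩ := h _ _ hjmono hlmono
  set Z : ℕ → Ω → X × X := fun k ω => (Y (m (G (φ k))) ω, Y (n (G (φ k))) ω) with hZdef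
  have hZ : ∀ k, Measurable (Z k) := fun k => (hY _).prodMk (hY _)
  haveI : ∀ k, IsProbabilityMeasure (P.map (Z k)) :=
    fun k => Measure.isProbabilityMeasure_map (hZ k).aemeasurable
  set νs : ℕ → ProbabilityMeasure (X × X) := fun k => ⟨P.map (Z k), inferInstance⟩ with hνsdef
  set ν : ProbabilityMeasure (X × X) := ⟨μ, hμP⟩ with hνdef
  have htendν : Tendsto νs atTop (nhds ν) := by
    rw [ProbabilityMeasure.tendsto_iff_forall_integral_tendsto]
    intro f
    exact hconv f
  set C : Set (X × X) := {p | ε ≤ dist p.1 p.2} with hCdef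
  have hCclosed : IsClosed C := isClosed_le continuous_const (continuous_fst.dist continuous_snd)
  have hport := ProbabilityMeasure.limsup_measure_closed_le_of_tendsto htendν hCclosed
  have hμC : μ C = 0 := by
    have hsub : C ⊆ {p : X × X | p.1 = p.2}ᶜ := by
      intro p hp heq
      have : dist p.1 p.2 = 0 := by rw [heq]; exact dist_self _
      rw [Set.mem_setOf_eq, this] at hp
      exact absurd (lt_of_lt_of_le hε hp) (lt_irrefl _)
    have hdiagmeas : MeasurableSet {p : X × X | p.1 = p.2} :=
      (isClosed_eq continuous_fst continuous_snd).measurableSet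
    have : μ {p : X × X | p.1 = p.2}ᶜ = 0 := by
      rw [measure_compl hdiagmeas (measure_ne_top μ _), hdiag, measure_univ, tsub_self]
    exact le_antisymm (le_trans (measure_mono hsub) this.le) zero_le
  have hlow : ∀ k, δ ≤ (νs k : Measure (X × X)) C := by
    intro k
    have h1 : δ ≤ P {ω | ε < dist (Y (m (G (φ k))) ω) (Y (n (G (φ k))) ω)} := hP (G (φ k))
    have h2 : P {ω | ε < dist (Y (m (G (φ k))) ω) (Y (n (G (φ k))) ω)} =
        (P.map (Z k)) {p : X × X | ε < dist p.1 p.2} := by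
      rw [Measure.map_apply (hZ k)
        ((isOpen_lt continuous_const (continuous_fst.dist continuous_snd)).measurableSet)]
      rfl
    refine le_trans h1 (le_trans h2.le (measure_mono fun p hp => show ε ≤ dist p.1 p.2 from le_of_lt hp))
  have hδlim : δ ≤ atTop.limsup fun k => (νs k : Measure (X × X)) C := by
    have := Filter.limsup_le_limsup (Eventually.of_forall hlow)
      (f := atTop (α := ℕ))
    rwa [Filter.limsup_const δ] at this
  have : δ ≤ 0 := le_trans hδlim (le_trans hport hμC.le)
  exact absurd (lt_of_lt_of_le hδ this) (lt_irrefl _)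

/-- Cauchy in probability implies convergence in probability to some measurable limit. -/
lemma stmt11_backward (hY : ∀ j, Measurable (Y j))
    (hc : ∀ ε : ℝ, 0 < ε → ∀ δ : ENNReal, 0 < δ → ∃ N : ℕ, ∀ m n : ℕ, N ≤ m → N ≤ n →
      P {ω | ε < dist (Y m ω) (Y n ω)} < δ) :
    ∃ Ylim : Ω → X, Measurable Ylim ∧
      ∀ ε : ℝ, 0 < ε →
        Tendsto (fun j => P {ω | ε < dist (Y j ω) (Ylim ω)}) atTop (nhds 0) := by
  haveI : SecondCountableTopology X := UniformSpace.secondCountable_of_separable X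
  have h2 : ∀ k : ℕ, ∃ N : ℕ, ∀ m n : ℕ, N ≤ m → N ≤ n →
      P {ω | (1 / 2 : ℝ) ^ k < dist (Y m ω) (Y n ω)} < (2 : ENNReal)⁻¹ ^ k := fun k =>
    hc _ (by positivity) _ (ENNReal.pow_pos (ENNReal.inv_pos.mpr ENNReal.ofNat_ne_top) k)
  choose N hN using h2
  set ψ : ℕ → ℕ := fun k => Nat.rec (N 0) (fun k ih => max (N (k + 1)) ih + 1) k with hψdef
  have hψsucc : ∀ k, ψ (k + 1) = max (N (k + 1)) (ψ k) + 1 := fun k => rfl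
  have hψmono : StrictMono ψ := by
    refine strictMono_nat_of_lt_succ fun k => ?_
    rw [hψsucc]
    exact Nat.lt_succ_of_le (le_max_right _ _)
  have hψN : ∀ k, N k ≤ ψ k := by
    intro k
    cases k with
    | zero => exact le_refl _
    | succ k => rw [hψsucc]; exact le_trans (le_max_left _ _) (Nat.le_succ _)
  set s : ℕ → Set Ω :=
    fun k => {ω | (1 / 2 : ℝ) ^ k < dist (Y (ψ (k + 1)) ω) (Y (ψ k) ω)} with hsdef
  have hs : ∀ k, P (s k) ≤ (2 : ENNReal)⁻¹ ^ k := fun k =>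
    (hN k _ _ (le_trans (hψN k) (hψmono.monotone (Nat.le_succ k))) (hψN k)).le
  have hsum : ∑' k, P (s k) ≠ ⊤ := by
    refine ne_top_of_le_ne_top ?_ (ENNReal.tsum_le_tsum hs)
    rw [ENNReal.tsum_geometric, ENNReal.one_sub_inv_two]
    simp
  -- Borel–Cantelli: a.e. only finitely many `s k` occur
  have hBC : ∀ᵐ ω ∂P, {k | ω ∈ s k}.Finite := ae_finite_setOf_mem hsum
  -- a.e. existence of a limit of the subsequence
  have hae : ∀ᵐ ω ∂P, ∃ a : X, Tendsto (fun k => Y (ψ k) ω) atTop (nhds a) := by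
    filter_upwards [hBC] with ω hω
    obtain ⟨K, hK⟩ := hω.bddAbove
    have hK' : ∀ k, K + 1 ≤ k → ω ∉ s k := by
      intro k hk hmem
      exact absurd (hK hmem) (by omega)
    have hdist : ∀ k, K + 1 ≤ k →
        dist (Y (ψ (k + 1)) ω) (Y (ψ k) ω) ≤ (1 / 2 : ℝ) ^ k := by
      intro k hk
      have := hK' k hk
      simpa [s, not_lt] using this
    set g : ℕ → X := fun i => Y (ψ (i + (K + 1))) ω with hgdef
    have hg : CauchySeq g := by
      refine cauchySeq_of_le_geometric (1 / 2) ((1 / 2 : ℝ) ^ (K + 1)) (by norm_num)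
        fun i => ?_
      rw [dist_comm]
      calc dist (g (i + 1)) (g i)
          = dist (Y (ψ (i + (K + 1) + 1)) ω) (Y (ψ (i + (K + 1))) ω) := by
            simp only [g, show i + 1 + (K + 1) = i + (K + 1) + 1 from by omega]
        _
          ≤ (1 / 2 : ℝ) ^ (i + (K + 1)) := hdist _ (by omega)
        _ = (1 / 2 : ℝ) ^ (K + 1) * (1 / 2 : ℝ) ^ i := by
            rw [← pow_add]; ring_nf
    obtain ⟨a, ha⟩ := cauchySeq_tendsto_of_complete hg
    exact ⟨a, (tendsto_add_atTop_iff_nat (K + 1)).mp ha⟩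
  obtain ⟨Ylim, hYlimmeas, hYlimtend⟩ :=
    measurable_limit_of_tendsto_metrizable_ae
      (fun k => (hY (ψ k)).aemeasurable) hae
  -- subsequence converges in probability to Ylim
  have htm : TendstoInMeasure P (fun k => Y (ψ k)) atTop Ylim :=
    tendstoInMeasure_of_tendsto_ae
      (fun k => (hY (ψ k)).aemeasurable.aestronglyMeasurable) hYlimtend
  refine ⟨Ylim, hYlimmeas, ?_⟩
  intro ε hε
  rw [ENNReal.tendsto_atTop_zero]
  intro δ hδ
  obtain ⟨N₁, hN₁⟩ := hc (ε / 2) (by positivity) (δ / 2)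
    (ENNReal.half_pos hδ.ne')
  have htm2 := ENNReal.tendsto_atTop_zero.mp (tendstoInMeasure_iff_dist.mp htm (ε / 2) (by positivity)) (δ / 2)
    (ENNReal.half_pos hδ.ne')
  obtain ⟨K₀, hK₀⟩ := htm2
  set K := max K₀ N₁ with hKdef
  have hψK : N₁ ≤ ψ K := le_trans (le_max_right _ _) (hψmono.le_apply)
  have hK₀' : P {ω | ε / 2 ≤ dist (Y (ψ K) ω) (Ylim ω)} ≤ δ / 2 :=
    hK₀ K (le_max_left _ _)
  refine ⟨N₁, fun n hn => ?_⟩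
  have hsub : {ω | ε < dist (Y n ω) (Ylim ω)} ⊆
      {ω | ε / 2 < dist (Y n ω) (Y (ψ K) ω)} ∪
      {ω | ε / 2 ≤ dist (Y (ψ K) ω) (Ylim ω)} := by
    intro ω hω
    by_contra hcon
    simp only [Set.mem_union, Set.mem_setOf_eq, not_or, not_lt, not_le] at hcon
    have htri := dist_triangle (Y n ω) (Y (ψ K) ω) (Ylim ω)
    have : dist (Y n ω) (Ylim ω) ≤ ε := by
      have h1 := hcon.1
      have h2 := hcon.2
      linarith
    exact absurd (show ε < dist (Y n ω) (Ylim ω) from hω) (not_lt.mpr this)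
  calc P {ω | ε < dist (Y n ω) (Ylim ω)}
      ≤ P ({ω | ε / 2 < dist (Y n ω) (Y (ψ K) ω)} ∪
          {ω | ε / 2 ≤ dist (Y (ψ K) ω) (Ylim ω)}) := measure_mono hsub
    _ ≤ P {ω | ε / 2 < dist (Y n ω) (Y (ψ K) ω)} +
        P {ω | ε / 2 ≤ dist (Y (ψ K) ω) (Ylim ω)} := measure_union_le _ _
    _ ≤ δ / 2 + δ / 2 := add_le_add (hN₁ n (ψ K) hn hψK).le hK₀'
    _ = δ := ENNReal.add_halves δ

end Aux

/-- Gyöngy–Krylov criterion: a sequence of `X`-valued random variables on a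
Polish space `X` converges in probability if and only if every pair of subsequences has joint
laws admitting a weakly convergent sub-subsequence whose limit is concentrated on the
diagonal. -/
theorem stmt11 {X : Type*} [MetricSpace X] [TopologicalSpace.SeparableSpace X]
    [CompleteSpace X] [MeasurableSpace X] [BorelSpace X]
    {Ω : Type*} [MeasurableSpace Ω] (P : Measure Ω) [IsProbabilityMeasure P]
    (Y : ℕ → Ω → X) (hY : ∀ j, Measurable (Y j)) :
    (∃ Ylim : Ω → X, Measurable Ylim ∧
        ∀ ε : ℝ, 0 < ε →
          Tendsto (fun j => P {ω | ε < dist (Y j ω) (Ylim ω)}) atTop (nhds 0)) ↔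
    (∀ j l : ℕ → ℕ, StrictMono j → StrictMono l →
        ∃ φ : ℕ → ℕ, StrictMono φ ∧
          ∃ μ : Measure (X × X), IsProbabilityMeasure μ ∧
            (∀ f : BoundedContinuousFunction (X × X) ℝ,
              Tendsto
                (fun k => ∫ p, f p ∂(P.map (fun ω => (Y (j (φ k)) ω, Y (l (φ k)) ω))))
                atTop (nhds (∫ p, f p ∂μ))) ∧
            μ {p : X × X | p.1 = p.2} = 1) := by
  constructor
  · rintro ⟨Ylim, hmeas, htend⟩ j l hj hl
    exact stmt11_forward P Y hY Ylim hmeas htend j l hj hl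
  · intro h
    exact stmt11_backward P Y hY (stmt11_cauchy P Y hY h)
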